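/- arXiv:2512.04807 — 3 statements merged into one kernel-verified Lean document; each statement's English description precedes it below -/
import Mathlib

section
/- Let F₁, F₂ be two nonempty sets such that F₁ ∩ F₂ is a nonempty finite set. For i = 1, 2, let (E_i, 𝓕_i) be a resistance form on F_i, and let (E, 𝓕) be the resistance form on F₁ ∪ F₂ given by 𝓕 = {f : f|_{F₁} ∈ 𝓕₁, f|_{F₂} ∈ 𝓕₂} and E(f,f) = E₁(f|_{F₁}, f|_{F₁}) + E₂(f|_{F₂}, f|_{F₂}). Let A ⊆ F₁ ∪ F₂ be a finite set containing F₁ ∩ F₂ and set A_i = A ∩ F_i for i = 1, 2. Let w_A : A × A → [0,∞) (respectively w_{A,i} : A_i × A_i → [0,∞)) be edge conductance functions whose associated graph energies equal the trace forms E|_A (respectively E_i|_{A_i}), i.e., (1/2) Σ_{x,y ∈ A} w_A(x,y)(g(x)−g(y))² = E|_A(g,g) for every g : A → ℝ, and similarly for w_{A,i}. Then w_A(x,y) = w_{A,1}(x,y) + w_{A,2}(x,y) if x, y ∈ F₁ ∩ F₂; w_A(x,y) = w_{A,1}(x,y) if x, y ∈ F₁ and {x,y} ⊄ F₁ ∩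 F₂; w_A(x,y) = w_{A,2}(x,y) if x, y ∈ F₂ and {x,y} ⊄ F₁ ∩ F₂; and w_A(x,y) = 0 otherwise. -/
open scoped Classical

/-- A resistance form `(En, Dom)` on a nonempty set `F` (Kigami).  `Dom` is a linear subspace
of the real-valued functions on `F` containing the constants; `En` is a nonnegative symmetric
bilinear form on `Dom` vanishing exactly on constants (RF1); the quotient of `Dom` by constants
is complete for the energy (pseudo-)norm (RF2, stated sequentially); `Dom` separates points
(RF3); the resistance suprema are finite (RF4); and the Markov/truncation property holds
(RF5). -/
structure IsResistanceForm (F : Type*) (En : (F → ℝ) → (F → ℝ) → ℝ)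
    (Dom : Set (F → ℝ)) : Prop where
  nonempty : Nonempty F
  const_mem : ∀ c : ℝ, (fun _ => c) ∈ Dom
  add_mem : ∀ ⦃f g : F → ℝ⦄, f ∈ Dom → g ∈ Dom → f + g ∈ Dom
  smul_mem : ∀ (c : ℝ) ⦃f : F → ℝ⦄, f ∈ Dom → c • f ∈ Dom
  symm : ∀ ⦃f g : F → ℝ⦄, f ∈ Dom → g ∈ Dom → En f g = En g f
  add_left : ∀ ⦃f g h : F → ℝ⦄, f ∈ Dom → g ∈ Dom → h ∈ Dom →
    En (f + g) h = En f h + En g h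
  smul_left : ∀ (c : ℝ) ⦃f g : F → ℝ⦄, f ∈ Dom → g ∈ Dom → En (c • f) g = c * En f g
  nonneg : ∀ ⦃f : F → ℝ⦄, f ∈ Dom → 0 ≤ En f f
  eq_zero_iff : ∀ ⦃f : F → ℝ⦄, f ∈ Dom → (En f f = 0 ↔ ∃ c : ℝ, f = fun _ => c)
  complete : ∀ u : ℕ → F → ℝ, (∀ n, u n ∈ Dom) →
    (∀ ε : ℝ, 0 < ε → ∃ N, ∀ m ≥ N, ∀ n ≥ N, En (u m - u n) (u m - u n) < ε) →
    ∃ g ∈ Dom, ∀ ε : ℝ, 0 < ε → ∃ N, ∀ n ≥ N, En (u n - g) (u n - g) < ε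
  separates : ∀ ⦃x y : F⦄, x ≠ y → ∃ f ∈ Dom, f x ≠ f y
  bddAbove : ∀ x y : F,
    BddAbove {r : ℝ | ∃ f ∈ Dom, 0 < En f f ∧ r = (f x - f y) ^ 2 / En f f}
  markov : ∀ ⦃f : F → ℝ⦄, f ∈ Dom →
    (fun t => min (max (f t) 0) 1) ∈ Dom ∧
    En (fun t => min (max (f t) 0) 1) (fun t => min (max (f t) 0) 1) ≤ En f f

/-- The resistance metric associated with a resistance form:
`R(x,y) = sup {(f x - f y)² / En f f}` for `x ≠ y`, and `R(x,x) = 0`. -/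
noncomputable def resMetric {F : Type*} (En : (F → ℝ) → (F → ℝ) → ℝ)
    (Dom : Set (F → ℝ)) (x y : F) : ℝ :=
  if x = y then 0
  else sSup {r : ℝ | ∃ f ∈ Dom, 0 < En f f ∧ r = (f x - f y) ^ 2 / En f f}

/-- The trace of a form `(En, Dom)` on a subset `A`: for `g : A → ℝ`,
`En|_A(g,g) = inf {En f f : f ∈ Dom, f|_A = g}`. -/
noncomputable def traceEnergy {F : Type*} (En : (F → ℝ) → (F → ℝ) → ℝ)
    (Dom : Set (F → ℝ)) (A : Set F) (g : ↥A → ℝ) : ℝ :=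
  sInf {e : ℝ | ∃ f ∈ Dom, A.restrict f = g ∧ En f f = e}

/-- An edge conductance function: nonnegative, symmetric, vanishing on the diagonal. -/
def IsConductance {V : Type*} (w : V → V → ℝ) : Prop :=
  (∀ x y, 0 ≤ w x y) ∧ (∀ x y, w x y = w y x) ∧ (∀ x, w x x = 0)

section RFAux
variable {F : Type*} {En : (F → ℝ) → (F → ℝ) → ℝ} {Dom : Set (F → ℝ)}

lemma RF.sub_mem (h : IsResistanceForm F En Dom) {f g : F → ℝ}
    (hf : f ∈ Dom) (hg : g ∈ Dom) : f - g ∈ Dom := by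
  have : f - g = f + (-1 : ℝ) • g := by funext t; simp; ring
  rw [this]; exact h.add_mem hf (h.smul_mem _ hg)

lemma RF.sep01 (h : IsResistanceForm F En Dom) {x y : F} (hxy : x ≠ y) :
    ∃ f ∈ Dom, f x = 1 ∧ f y = 0 ∧ ∀ t, 0 ≤ f t ∧ f t ≤ 1 := by
  obtain ⟨h0, h0mem, hne⟩ := h.separates hxy
  have hc : h0 x - h0 y ≠ 0 := sub_ne_zero.mpr hne
  set f0 : F → ℝ := (h0 x - h0 y)⁻¹ • (h0 + (fun _ => -h0 y)) with hf0def
  have hf0 : f0 ∈ Dom := h.smul_mem _ (h.add_mem h0mem (h.const_mem _))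
  have hf0x : f0 x = 1 := by
    simp only [hf0def, Pi.smul_apply, Pi.add_apply, smul_eq_mul]
    rw [← sub_eq_add_neg]; exact inv_mul_cancel₀ hc
  have hf0y : f0 y = 0 := by
    simp only [hf0def, Pi.smul_apply, Pi.add_apply, smul_eq_mul]
    rw [← sub_eq_add_neg]; simp
  obtain ⟨hmem, -⟩ := h.markov hf0
  refine ⟨_, hmem, by simp [hf0x], by simp [hf0y], fun t => ?_⟩
  constructor
  · exact le_min (le_max_right _ _) zero_le_one
  · exact min_le_right _ _

lemma RF.min_mem (h : IsResistanceForm F En Dom) {f g : F → ℝ}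
    (hf : f ∈ Dom) (hg : g ∈ Dom)
    (hf01 : ∀ t, 0 ≤ f t ∧ f t ≤ 1) (hg01 : ∀ t, 0 ≤ g t ∧ g t ≤ 1) :
    (fun t => min (f t) (g t)) ∈ Dom := by
  have hsub : f - g ∈ Dom := RF.sub_mem h hf hg
  obtain ⟨htr, -⟩ := h.markov hsub
  have key : (fun t => min (f t) (g t))
      = f + (-1 : ℝ) • (fun t => min (max ((f - g) t) 0) 1) := by
    funext t
    obtain ⟨hf0, hf1⟩ := hf01 t
    obtain ⟨hg0, hg1⟩ := hg01 t
    simp only [Pi.add_apply, Pi.smul_apply, Pi.sub_apply, smul_eq_mul]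
    rcases le_total (f t) (g t) with hle | hle <;>
      simp only [min_def, max_def] <;> split_ifs <;> linarith
  rw [key]; exact h.add_mem hf (h.smul_mem _ htr)

lemma RF.indicator_ext (h : IsResistanceForm F En Dom) (a : F) (s : Finset F) (ha : a ∉ s) :
    ∃ f ∈ Dom, f a = 1 ∧ (∀ t, 0 ≤ f t ∧ f t ≤ 1) ∧ ∀ b ∈ s, f b = 0 := by
  induction s using Finset.induction_on with
  | empty => exact ⟨fun _ => 1, h.const_mem 1, rfl, fun t => ⟨zero_le_one, le_rfl⟩, by simp⟩
  | @insert b s hb ih =>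
    have hab : a ≠ b := fun hh => ha (by simp [hh])
    obtain ⟨f, hfmem, hfa, hf01, hf0⟩ := ih (fun hh => ha (by simp [hh]))
    obtain ⟨g, hgmem, hga, hgb, hg01⟩ := RF.sep01 h hab
    refine ⟨fun t => min (f t) (g t), RF.min_mem h hfmem hgmem hf01 hg01, by simp [hfa, hga],
      fun t => ⟨le_min (hf01 t).1 (hg01 t).1, le_trans (min_le_left _ _) (hf01 t).2⟩, ?_⟩
    intro c hc
    rcases Finset.mem_insert.mp hc with rfl | hc
    · show f c ⊓ g c = 0
      rw [hgb]; exact min_eq_right (hf01 c).1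
    · show f c ⊓ g c = 0
      rw [hf0 c hc]; exact min_eq_left (hg01 c).1

lemma RF.finite_ext (h : IsResistanceForm F En Dom) (A : Set F) [Fintype ↥A] (g : ↥A → ℝ) :
    ∃ f ∈ Dom, A.restrict f = g := by
  have hz : (0 : F → ℝ) ∈ Dom := by
    have := h.const_mem 0
    convert this using 1
    exact funext fun _ => rfl
  choose f hfmem hf1 hf01 hf0 using fun a : ↥A =>
    RF.indicator_ext h (a : F) ((Finset.univ.image (Subtype.val : ↥A → F)).erase (a : F))
      (Finset.notMem_erase _ _)
  refine ⟨∑ a : ↥A, g a • f a, ?_, ?_⟩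
  · exact Finset.sum_induction _ (· ∈ Dom) (fun _ _ hu hv => h.add_mem hu hv) hz
      (fun a _ => h.smul_mem _ (hfmem a))
  · funext b
    show (∑ a : ↥A, g a • f a) (b : F) = g b
    simp only [Set.restrict_apply, Finset.sum_apply, Pi.smul_apply, smul_eq_mul]
    rw [Finset.sum_eq_single b]
    · rw [hf1 b]; ring
    · intro a _ hab
      rw [hf0 a (b : F) (Finset.mem_erase.mpr ⟨fun hh => hab (Subtype.ext hh).symm,
        Finset.mem_image.mpr ⟨b, Finset.mem_univ _, rfl⟩⟩)]; ring
    · intro hb; exact absurd (Finset.mem_univ b) hb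

end RFAux

noncomputable def dlt {V : Type*} (x : V) : V → ℝ := fun v => if v = x then 1 else 0

section QAux
variable {V : Type*} [Fintype V] {w : V → V → ℝ}

lemma sum_mul_dlt (c : V → ℝ) (x : V) : ∑ v, c v * dlt x v = c x := by
  simp [dlt]

lemma double_sum_dlt (w : V → V → ℝ) (x y : V) :
    ∑ u, ∑ v, w u v * dlt x u * dlt y v = w x y := by
  have inner : ∀ u, ∑ v, w u v * dlt x u * dlt y v = w u y * dlt x u := by
    intro u
    have e : ∀ v, w u v * dlt x u * dlt y v = (fun v => w u v * dlt x u) v * dlt y v :=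
      fun v => by ring
    simp only [e]
    rw [sum_mul_dlt (fun v => w u v * dlt x u) y]
  simp only [inner]
  exact sum_mul_dlt (fun u => w u y) x

lemma double_sum_dlt_left (w : V → V → ℝ) (x : V) :
    ∑ u, ∑ v, w u v * dlt x u = ∑ v, w x v := by
  have inner : ∀ u, ∑ v, w u v * dlt x u = (fun u => ∑ v, w u v) u * dlt x u :=
    fun u => (Finset.sum_mul _ _ _).symm
  simp only [inner]
  exact sum_mul_dlt (fun u => ∑ v, w u v) x

lemma QE_eval (hw : IsConductance w) (g : V → ℝ) (hg : ∀ v, g v * g v = g v) :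
    (1/2) * ∑ u, ∑ v, w u v * (g u - g v)^2
      = (∑ u, ∑ v, w u v * g u) - ∑ u, ∑ v, w u v * g u * g v := by
  have swap : ∑ u, ∑ v, w u v * g v = ∑ u, ∑ v, w u v * g u := by
    rw [Finset.sum_comm]
    exact Finset.sum_congr rfl fun u _ => Finset.sum_congr rfl fun v _ => by rw [hw.2.1 v u]
  have expand : ∀ u v : V, w u v * (g u - g v)^2
      = (w u v * g u + w u v * g v) - 2 * (w u v * g u * g v) := by
    intro u v
    have h : (g u - g v)^2 = g u * g u + g v * g v - 2 * (g u * g v) := by ring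
    rw [hg u, hg v] at h
    rw [h]; ring
  calc (1/2) * ∑ u, ∑ v, w u v * (g u - g v)^2
      = (1/2) * ∑ u, ∑ v, ((w u v * g u + w u v * g v) - 2 * (w u v * g u * g v)) := by
        congr 1; exact Finset.sum_congr rfl fun u _ => Finset.sum_congr rfl fun v _ => expand u v
    _ = (1/2) * ((∑ u, ∑ v, w u v * g u) + (∑ u, ∑ v, w u v * g v)
          - ∑ u, ∑ v, 2 * (w u v * g u * g v)) := by
        simp only [Finset.sum_sub_distrib, Finset.sum_add_distrib]
    _ = (1/2) * ((∑ u, ∑ v, w u v * g u) + (∑ u, ∑ v, w u v * g v)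
          - 2 * ∑ u, ∑ v, w u v * g u * g v) := by
        simp only [← Finset.mul_sum]
    _ = _ := by rw [swap]; ring

lemma QE_dlt (hw : IsConductance w) (x : V) :
    (1/2) * ∑ u, ∑ v, w u v * (dlt x u - dlt x v)^2 = ∑ v, w x v := by
  rw [QE_eval hw (dlt x) (fun v => by by_cases h : v = x <;> simp [dlt, h]),
    double_sum_dlt_left, double_sum_dlt, hw.2.2 x, sub_zero]

lemma QE_dlt_add (hw : IsConductance w) {x y : V} (hxy : x ≠ y) :
    (1/2) * ∑ u, ∑ v, w u v * ((dlt x + dlt y) u - (dlt x + dlt y) v)^2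
      = (∑ v, w x v) + (∑ v, w y v) - 2 * w x y := by
  have hg : ∀ v, (dlt x + dlt y) v * (dlt x + dlt y) v = (dlt x + dlt y) v := by
    intro v
    by_cases h1 : v = x
    · by_cases h2 : v = y
      · exact absurd (h1.symm.trans h2) hxy
      · simp [dlt, h1, hxy]
    · by_cases h2 : v = y <;> simp [dlt, h1, h2, Ne.symm hxy]
  rw [QE_eval hw _ hg]
  have e1 : ∀ u v : V, w u v * (dlt x + dlt y) u = w u v * dlt x u + w u v * dlt y u := by
    intro u v; simp only [Pi.add_apply]; ring
  have e2 : ∀ u v : V, w u v * (dlt x + dlt y) u * (dlt x + dlt y) v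
      = w u v * dlt x u * dlt x v + w u v * dlt x u * dlt y v
        + (w u v * dlt y u * dlt x v + w u v * dlt y u * dlt y v) := by
    intro u v; simp only [Pi.add_apply]; ring
  simp only [e2]
  simp only [e1]
  simp only [Finset.sum_add_distrib]
  rw [double_sum_dlt_left, double_sum_dlt_left, double_sum_dlt, double_sum_dlt,
    double_sum_dlt, double_sum_dlt, hw.2.2 x, hw.2.2 y, hw.2.1 y x]
  ring

lemma conductance_extract (hw : IsConductance w) {x y : V} (hxy : x ≠ y) :
    w x y = ((1/2) * ∑ u, ∑ v, w u v * (dlt x u - dlt x v)^2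
      + (1/2) * ∑ u, ∑ v, w u v * (dlt y u - dlt y v)^2
      - (1/2) * ∑ u, ∑ v, w u v * ((dlt x + dlt y) u - (dlt x + dlt y) v)^2) / 2 := by
  rw [QE_dlt hw x, QE_dlt hw y, QE_dlt_add hw hxy]
  ring

lemma QE_zero (w : V → V → ℝ) :
    (1/2) * ∑ u, ∑ v, w u v * ((0 : V → ℝ) u - (0 : V → ℝ) v)^2 = 0 := by
  simp

end QAux

noncomputable def QE {V : Type*} [Fintype V] (w : V → V → ℝ) (g : V → ℝ) : ℝ :=
  (1/2) * ∑ u, ∑ v, w u v * (g u - g v)^2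

def restr {F : Type*} {S : Set F} (A : Set F) (A' : Set ↥S)
    (h : ∀ s : ↥S, s ∈ A' ↔ (s : F) ∈ A) : (↥A → ℝ) → (↥A' → ℝ) :=
  fun g a => g ⟨a.1.1, (h a.1).mp a.2⟩

section RestrAux
variable {F : Type*} {S : Set F} {A : Set F} {A' : Set ↥S}
  {h : ∀ s : ↥S, s ∈ A' ↔ (s : F) ∈ A}

lemma restr_add (g g' : ↥A → ℝ) :
    restr A A' h (g + g') = restr A A' h g + restr A A' h g' := rfl

lemma restr_dlt_mem (x : ↥A) (hx : (x : F) ∈ S) :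
    restr A A' h (dlt x) = dlt (⟨⟨(x : F), hx⟩, (h ⟨(x : F), hx⟩).mpr x.2⟩ : ↥A') := by
  funext a
  show dlt x ⟨a.1.1, (h a.1).mp a.2⟩ = _
  simp only [dlt]
  have hiff : ((⟨a.1.1, (h a.1).mp a.2⟩ : ↥A) = x)
      ↔ (a = ⟨⟨(x : F), hx⟩, (h ⟨(x : F), hx⟩).mpr x.2⟩) := by
    constructor
    · intro hh
      have h1 : ((⟨a.1.1, (h a.1).mp a.2⟩ : ↥A) : F) = (x : F) := congrArg Subtype.val hh
      exact Subtype.ext (Subtype.ext h1)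
    · intro hh; subst hh; exact Subtype.ext rfl
  by_cases hc : a = ⟨⟨(x : F), hx⟩, (h ⟨(x : F), hx⟩).mpr x.2⟩
  · rw [if_pos (hiff.mpr hc), if_pos hc]
  · rw [if_neg (fun hh => hc (hiff.mp hh)), if_neg hc]

lemma restr_dlt_zero (x : ↥A) (hx : (x : F) ∉ S) :
    restr A A' h (dlt x) = 0 := by
  funext a
  show dlt x ⟨a.1.1, (h a.1).mp a.2⟩ = 0
  simp only [dlt]
  rw [if_neg]
  intro hh
  exact hx (congrArg Subtype.val hh ▸ a.1.2)

end RestrAux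


section QEWrap
variable {V : Type*} [Fintype V] {w : V → V → ℝ}

lemma QE_zero' (w : V → V → ℝ) : QE w (0 : V → ℝ) = 0 := by simp [QE]

lemma QE_dlt' (hw : IsConductance w) (x : V) : QE w (dlt x) = ∑ v, w x v := QE_dlt hw x

lemma QE_dlt_add' (hw : IsConductance w) {x y : V} (hxy : x ≠ y) :
    QE w (dlt x + dlt y) = (∑ v, w x v) + (∑ v, w y v) - 2 * w x y := QE_dlt_add hw hxy

lemma conductance_extract' (hw : IsConductance w) {x y : V} (hxy : x ≠ y) :
    w x y = (QE w (dlt x) + QE w (dlt y) - QE w (dlt x + dlt y)) / 2 :=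
  conductance_extract hw hxy

lemma T_side_two (hw : IsConductance w) {a b : V} (hab : a ≠ b) :
    QE w (dlt a) + QE w (dlt b) - QE w (dlt a + dlt b) = 2 * w a b := by
  rw [QE_dlt' hw, QE_dlt' hw, QE_dlt_add' hw hab]; ring

lemma T_side_zero (w : V → V → ℝ) {p q : V → ℝ} (h : p = 0 ∨ q = 0) :
    QE w p + QE w q - QE w (p + q) = 0 := by
  rcases h with rfl | rfl
  · rw [QE_zero', zero_add, zero_add, sub_self]
  · rw [QE_zero', add_zero, add_zero, sub_self]

omit [Fintype V] in
lemma cond_diag (hw : IsConductance w) {a b : V} (h : a = b) : w a b = 0 := by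
  rw [h, hw.2.2]

end QEWrap

lemma subsub_val {α : Type*} {p : α → Prop} {q : {a // p a} → Prop}
    {a b : {x // q x}} (h : a = b) : (a.1.1 : α) = b.1.1 := by rw [h]


lemma trace_decomp {F : Type*} (S₁ S₂ : Set F)
    (hUnion : S₁ ∪ S₂ = Set.univ)
    (En₁ : (↥S₁ → ℝ) → (↥S₁ → ℝ) → ℝ) (Dom₁ : Set (↥S₁ → ℝ))
    (En₂ : (↥S₂ → ℝ) → (↥S₂ → ℝ) → ℝ) (Dom₂ : Set (↥S₂ → ℝ))
    (h₁ : IsResistanceForm ↥S₁ En₁ Dom₁)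
    (h₂ : IsResistanceForm ↥S₂ En₂ Dom₂)
    (En : (F → ℝ) → (F → ℝ) → ℝ) (Dom : Set (F → ℝ))
    (hDom : Dom = {f : F → ℝ | S₁.restrict f ∈ Dom₁ ∧ S₂.restrict f ∈ Dom₂})
    (hEn : ∀ f g : F → ℝ,
      En f g = En₁ (S₁.restrict f) (S₁.restrict g) + En₂ (S₂.restrict f) (S₂.restrict g))
    (A : Set F) (hsub : S₁ ∩ S₂ ⊆ A)
    (A₁ : Set ↥S₁) [Fintype ↥A₁] (hA₁ : ∀ s : ↥S₁, s ∈ A₁ ↔ (s : F) ∈ A)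
    (A₂ : Set ↥S₂) [Fintype ↥A₂] (hA₂ : ∀ s : ↥S₂, s ∈ A₂ ↔ (s : F) ∈ A)
    (g : ↥A → ℝ) :
    traceEnergy En Dom A g
      = traceEnergy En₁ Dom₁ A₁ (restr A A₁ hA₁ g)
        + traceEnergy En₂ Dom₂ A₂ (restr A A₂ hA₂ g) := by
  classical
  have hmem2 : ∀ t : F, t ∉ S₁ → t ∈ S₂ := by
    intro t ht
    have : t ∈ S₁ ∪ S₂ := by rw [hUnion]; trivial
    exact this.resolve_left ht
  set T : Set ℝ := {e | ∃ f ∈ Dom, A.restrict f = g ∧ En f f = e} with hTdef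
  set T₁ : Set ℝ := {e | ∃ f ∈ Dom₁, A₁.restrict f = restr A A₁ hA₁ g ∧ En₁ f f = e} with hT₁def
  set T₂ : Set ℝ := {e | ∃ f ∈ Dom₂, A₂.restrict f = restr A A₂ hA₂ g ∧ En₂ f f = e} with hT₂def
  have hTrace : traceEnergy En Dom A g = sInf T := rfl
  have hTrace1 : traceEnergy En₁ Dom₁ A₁ (restr A A₁ hA₁ g) = sInf T₁ := rfl
  have hTrace2 : traceEnergy En₂ Dom₂ A₂ (restr A A₂ hA₂ g) = sInf T₂ := rfl
  rw [hTrace, hTrace1, hTrace2]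
  have hT1ne : T₁.Nonempty := by
    obtain ⟨f, hf, hr⟩ := RF.finite_ext h₁ A₁ (restr A A₁ hA₁ g)
    exact ⟨En₁ f f, f, hf, hr, rfl⟩
  have hT2ne : T₂.Nonempty := by
    obtain ⟨f, hf, hr⟩ := RF.finite_ext h₂ A₂ (restr A A₂ hA₂ g)
    exact ⟨En₂ f f, f, hf, hr, rfl⟩
  have hbdd1 : BddBelow T₁ := by
    refine ⟨0, ?_⟩; rintro e ⟨f, hf, -, rfl⟩; exact h₁.nonneg hf
  have hbdd2 : BddBelow T₂ := by
    refine ⟨0, ?_⟩; rintro e ⟨f, hf, -, rfl⟩; exact h₂.nonneg hf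
  have hbddT : BddBelow T := by
    refine ⟨0, ?_⟩
    rintro e ⟨f, hf, -, rfl⟩
    rw [hDom] at hf
    rw [hEn]
    exact add_nonneg (h₁.nonneg hf.1) (h₂.nonneg hf.2)
  have glue : ∀ e₁ ∈ T₁, ∀ e₂ ∈ T₂, e₁ + e₂ ∈ T := by
    rintro e₁ ⟨f₁, hf₁, hr₁, rfl⟩ e₂ ⟨f₂, hf₂, hr₂, rfl⟩
    have hoverlap : ∀ (t : F) (ht1 : t ∈ S₁) (ht2 : t ∈ S₂), f₁ ⟨t, ht1⟩ = f₂ ⟨t, ht2⟩ := by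
      intro t ht1 ht2
      have htA : t ∈ A := hsub ⟨ht1, ht2⟩
      have e1 : f₁ ⟨t, ht1⟩ = g ⟨t, htA⟩ :=
        congrFun hr₁ ⟨⟨t, ht1⟩, (hA₁ ⟨t, ht1⟩).mpr htA⟩
      have e2 : f₂ ⟨t, ht2⟩ = g ⟨t, htA⟩ :=
        congrFun hr₂ ⟨⟨t, ht2⟩, (hA₂ ⟨t, ht2⟩).mpr htA⟩
      rw [e1, e2]
    refine ⟨fun t => if h : t ∈ S₁ then f₁ ⟨t, h⟩ else f₂ ⟨t, hmem2 t h⟩, ?_, ?_, ?_⟩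
    case refine_1 =>
      have hres1 : S₁.restrict (fun t => if h : t ∈ S₁ then f₁ ⟨t, h⟩ else f₂ ⟨t, hmem2 t h⟩)
          = f₁ := by
        funext s
        show (if h : (s : F) ∈ S₁ then f₁ ⟨s, h⟩ else f₂ ⟨s, hmem2 s h⟩) = f₁ s
        exact dif_pos s.2
      have hres2 : S₂.restrict (fun t => if h : t ∈ S₁ then f₁ ⟨t, h⟩ else f₂ ⟨t, hmem2 t h⟩)
          = f₂ := by
        funext s
        show (if h : (s : F) ∈ S₁ then f₁ ⟨s, h⟩ else f₂ ⟨s, hmem2 s h⟩) = f₂ s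
        by_cases h : (s : F) ∈ S₁
        · rw [dif_pos h]; exact hoverlap s h s.2
        · exact dif_neg h
      rw [hDom]
      exact ⟨by rw [hres1]; exact hf₁, by rw [hres2]; exact hf₂⟩
    case refine_2 =>
      funext a
      show (if h : (a : F) ∈ S₁ then f₁ ⟨a, h⟩ else f₂ ⟨a, hmem2 a h⟩) = g a
      by_cases h : (a : F) ∈ S₁
      · rw [dif_pos h]
        exact congrFun hr₁ ⟨⟨a, h⟩, (hA₁ ⟨a, h⟩).mpr a.2⟩
      · rw [dif_neg h]
        exact congrFun hr₂ ⟨⟨a, hmem2 a h⟩, (hA₂ ⟨a, hmem2 a h⟩).mpr a.2⟩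
    case refine_3 =>
      have hres1 : S₁.restrict (fun t => if h : t ∈ S₁ then f₁ ⟨t, h⟩ else f₂ ⟨t, hmem2 t h⟩)
          = f₁ := by
        funext s
        show (if h : (s : F) ∈ S₁ then f₁ ⟨s, h⟩ else f₂ ⟨s, hmem2 s h⟩) = f₁ s
        exact dif_pos s.2
      have hres2 : S₂.restrict (fun t => if h : t ∈ S₁ then f₁ ⟨t, h⟩ else f₂ ⟨t, hmem2 t h⟩)
          = f₂ := by
        funext s
        show (if h : (s : F) ∈ S₁ then f₁ ⟨s, h⟩ else f₂ ⟨s, hmem2 s h⟩) = f₂ s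
        by_cases h : (s : F) ∈ S₁
        · rw [dif_pos h]; exact hoverlap s h s.2
        · exact dif_neg h
      rw [hEn, hres1, hres2]
  have hTne : T.Nonempty := by
    obtain ⟨e₁, he₁⟩ := hT1ne
    obtain ⟨e₂, he₂⟩ := hT2ne
    exact ⟨e₁ + e₂, glue e₁ he₁ e₂ he₂⟩
  have hsplit : ∀ e ∈ T, sInf T₁ + sInf T₂ ≤ e := by
    rintro e ⟨f, hf, hres, rfl⟩
    rw [hDom] at hf
    have hm1 : En₁ (S₁.restrict f) (S₁.restrict f) ∈ T₁ := by
      refine ⟨S₁.restrict f, hf.1, ?_, rfl⟩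
      funext a
      exact congrFun hres ⟨a.1.1, (hA₁ a.1).mp a.2⟩
    have hm2 : En₂ (S₂.restrict f) (S₂.restrict f) ∈ T₂ := by
      refine ⟨S₂.restrict f, hf.2, ?_, rfl⟩
      funext a
      exact congrFun hres ⟨a.1.1, (hA₂ a.1).mp a.2⟩
    rw [hEn f f]
    exact add_le_add (csInf_le hbdd1 hm1) (csInf_le hbdd2 hm2)
  apply le_antisymm
  · have h1 : sInf T - sInf T₂ ≤ sInf T₁ := by
      apply le_csInf hT1ne
      intro e₁ he₁
      have h2 : sInf T - e₁ ≤ sInf T₂ := by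
        apply le_csInf hT2ne
        intro e₂ he₂
        have h3 := csInf_le hbddT (glue e₁ he₁ e₂ he₂)
        linarith
      linarith
    linarith
  · exact le_csInf hTne hsplit

/-- Let `(En, Dom)` be the glued resistance form on `F₁ ∪ F₂` of resistance forms on `F₁, F₂`
with nonempty finite intersection.  Let `A ⊇ F₁ ∩ F₂` be finite, `A_i = A ∩ F_i`, and let
`wA`, `wA₁`, `wA₂` be conductance functions whose graph energies realize the traces
`En|_A`, `En₁|_{A₁}`, `En₂|_{A₂}`.  Then `wA` decomposes: it is `wA₁ + wA₂` on pairs in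
`F₁ ∩ F₂`, agrees with `wA₁` (resp. `wA₂`) on other pairs inside `F₁` (resp. `F₂`), and
vanishes on pairs not contained in either. -/
theorem trace_weights_glue {F : Type*} (S₁ S₂ : Set F)
    (hUnion : S₁ ∪ S₂ = Set.univ)
    (hFin : (S₁ ∩ S₂).Finite) (hNe : (S₁ ∩ S₂).Nonempty)
    (En₁ : (↥S₁ → ℝ) → (↥S₁ → ℝ) → ℝ) (Dom₁ : Set (↥S₁ → ℝ))
    (En₂ : (↥S₂ → ℝ) → (↥S₂ → ℝ) → ℝ) (Dom₂ : Set (↥S₂ → ℝ))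
    (h₁ : IsResistanceForm ↥S₁ En₁ Dom₁)
    (h₂ : IsResistanceForm ↥S₂ En₂ Dom₂)
    (En : (F → ℝ) → (F → ℝ) → ℝ) (Dom : Set (F → ℝ))
    (hDom : Dom = {f : F → ℝ | S₁.restrict f ∈ Dom₁ ∧ S₂.restrict f ∈ Dom₂})
    (hEn : ∀ f g : F → ℝ,
      En f g = En₁ (S₁.restrict f) (S₁.restrict g) + En₂ (S₂.restrict f) (S₂.restrict g))
    (A : Set F) [Fintype ↥A] (hsub : S₁ ∩ S₂ ⊆ A)
    (A₁ : Set ↥S₁) [Fintype ↥A₁] (hA₁ : ∀ s : ↥S₁, s ∈ A₁ ↔ (s : F) ∈ A)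
    (A₂ : Set ↥S₂) [Fintype ↥A₂] (hA₂ : ∀ s : ↥S₂, s ∈ A₂ ↔ (s : F) ∈ A)
    (wA : ↥A → ↥A → ℝ) (hwA : IsConductance wA)
    (hwAen : ∀ g : ↥A → ℝ,
      (1 / 2) * ∑ x, ∑ y, wA x y * (g x - g y) ^ 2 = traceEnergy En Dom A g)
    (wA₁ : ↥A₁ → ↥A₁ → ℝ) (hwA₁ : IsConductance wA₁)
    (hwA₁en : ∀ g : ↥A₁ → ℝ,
      (1 / 2) * ∑ x, ∑ y, wA₁ x y * (g x - g y) ^ 2 = traceEnergy En₁ Dom₁ A₁ g)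
    (wA₂ : ↥A₂ → ↥A₂ → ℝ) (hwA₂ : IsConductance wA₂)
    (hwA₂en : ∀ g : ↥A₂ → ℝ,
      (1 / 2) * ∑ x, ∑ y, wA₂ x y * (g x - g y) ^ 2 = traceEnergy En₂ Dom₂ A₂ g) :
    ∀ x y : ↥A,
      (∀ (hx1 : (x : F) ∈ S₁) (hx2 : (x : F) ∈ S₂) (hy1 : (y : F) ∈ S₁) (hy2 : (y : F) ∈ S₂),
        wA x y =
          wA₁ ⟨⟨(x : F), hx1⟩, (hA₁ ⟨(x : F), hx1⟩).mpr x.2⟩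
              ⟨⟨(y : F), hy1⟩, (hA₁ ⟨(y : F), hy1⟩).mpr y.2⟩ +
          wA₂ ⟨⟨(x : F), hx2⟩, (hA₂ ⟨(x : F), hx2⟩).mpr x.2⟩
              ⟨⟨(y : F), hy2⟩, (hA₂ ⟨(y : F), hy2⟩).mpr y.2⟩) ∧
      (∀ (hx1 : (x : F) ∈ S₁) (hy1 : (y : F) ∈ S₁),
        ¬((x : F) ∈ S₂ ∧ (y : F) ∈ S₂) →
        wA x y =
          wA₁ ⟨⟨(x : F), hx1⟩, (hA₁ ⟨(x : F), hx1⟩).mpr x.2⟩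
              ⟨⟨(y : F), hy1⟩, (hA₁ ⟨(y : F), hy1⟩).mpr y.2⟩) ∧
      (∀ (hx2 : (x : F) ∈ S₂) (hy2 : (y : F) ∈ S₂),
        ¬((x : F) ∈ S₁ ∧ (y : F) ∈ S₁) →
        wA x y =
          wA₂ ⟨⟨(x : F), hx2⟩, (hA₂ ⟨(x : F), hx2⟩).mpr x.2⟩
              ⟨⟨(y : F), hy2⟩, (hA₂ ⟨(y : F), hy2⟩).mpr y.2⟩) ∧
      (¬((x : F) ∈ S₁ ∧ (y : F) ∈ S₁) → ¬((x : F) ∈ S₂ ∧ (y : F) ∈ S₂) →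
        wA x y = 0) := by
  intro x y
  have QEdec : ∀ g : ↥A → ℝ,
      QE wA g = QE wA₁ (restr A A₁ hA₁ g) + QE wA₂ (restr A A₂ hA₂ g) := by
    intro g
    have e0 : QE wA g = traceEnergy En Dom A g := hwAen g
    have e1 : QE wA₁ (restr A A₁ hA₁ g)
        = traceEnergy En₁ Dom₁ A₁ (restr A A₁ hA₁ g) := hwA₁en _
    have e2 : QE wA₂ (restr A A₂ hA₂ g)
        = traceEnergy En₂ Dom₂ A₂ (restr A A₂ hA₂ g) := hwA₂en _
    rw [e0, e1, e2]
    exact trace_decomp S₁ S₂ hUnion En₁ Dom₁ En₂ Dom₂ h₁ h₂ En Dom hDom hEn A hsub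
      A₁ hA₁ A₂ hA₂ g
  rcases eq_or_ne x y with rfl | hxy
  · refine ⟨fun hx1 hx2 hy1 hy2 => ?_, fun hx1 hy1 _ => ?_, fun hx2 hy2 _ => ?_,
      fun _ _ => ?_⟩
    · rw [hwA.2.2, cond_diag hwA₁ (Subtype.ext (Subtype.ext rfl)),
        cond_diag hwA₂ (Subtype.ext (Subtype.ext rfl))]
      norm_num
    · rw [hwA.2.2, cond_diag hwA₁ (Subtype.ext (Subtype.ext rfl))]
    · rw [hwA.2.2, cond_diag hwA₂ (Subtype.ext (Subtype.ext rfl))]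
    · exact hwA.2.2 x
  · have hval : (x : F) ≠ (y : F) := fun h => hxy (Subtype.ext h)
    have master : wA x y
        = (QE wA (dlt x) + QE wA (dlt y) - QE wA (dlt x + dlt y)) / 2 :=
      conductance_extract' hwA hxy
    rw [QEdec (dlt x), QEdec (dlt y), QEdec (dlt x + dlt y), restr_add, restr_add] at master
    refine ⟨?_, ?_, ?_, ?_⟩
    · intro hx1 hx2 hy1 hy2
      have T1 : QE wA₁ (restr A A₁ hA₁ (dlt x)) + QE wA₁ (restr A A₁ hA₁ (dlt y))
          - QE wA₁ (restr A A₁ hA₁ (dlt x) + restr A A₁ hA₁ (dlt y))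
          = 2 * wA₁ ⟨⟨(x : F), hx1⟩, (hA₁ ⟨(x : F), hx1⟩).mpr x.2⟩
              ⟨⟨(y : F), hy1⟩, (hA₁ ⟨(y : F), hy1⟩).mpr y.2⟩ := by
        rw [restr_dlt_mem x hx1, restr_dlt_mem y hy1]
        exact T_side_two hwA₁
          (fun h => hval (subsub_val h))
      have T2 : QE wA₂ (restr A A₂ hA₂ (dlt x)) + QE wA₂ (restr A A₂ hA₂ (dlt y))
          - QE wA₂ (restr A A₂ hA₂ (dlt x) + restr A A₂ hA₂ (dlt y))
          = 2 * wA₂ ⟨⟨(x : F), hx2⟩, (hA₂ ⟨(x : F), hx2⟩).mpr x.2⟩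
              ⟨⟨(y : F), hy2⟩, (hA₂ ⟨(y : F), hy2⟩).mpr y.2⟩ := by
        rw [restr_dlt_mem x hx2, restr_dlt_mem y hy2]
        exact T_side_two hwA₂
          (fun h => hval (subsub_val h))
      linarith
    · intro hx1 hy1 hnot
      have T1 : QE wA₁ (restr A A₁ hA₁ (dlt x)) + QE wA₁ (restr A A₁ hA₁ (dlt y))
          - QE wA₁ (restr A A₁ hA₁ (dlt x) + restr A A₁ hA₁ (dlt y))
          = 2 * wA₁ ⟨⟨(x : F), hx1⟩, (hA₁ ⟨(x : F), hx1⟩).mpr x.2⟩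
              ⟨⟨(y : F), hy1⟩, (hA₁ ⟨(y : F), hy1⟩).mpr y.2⟩ := by
        rw [restr_dlt_mem x hx1, restr_dlt_mem y hy1]
        exact T_side_two hwA₁
          (fun h => hval (subsub_val h))
      have T2 : QE wA₂ (restr A A₂ hA₂ (dlt x)) + QE wA₂ (restr A A₂ hA₂ (dlt y))
          - QE wA₂ (restr A A₂ hA₂ (dlt x) + restr A A₂ hA₂ (dlt y)) = 0 := by
        apply T_side_zero
        rcases not_and_or.mp hnot with hx | hy
        · exact Or.inl (restr_dlt_zero x hx)
        · exact Or.inr (restr_dlt_zero y hy)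
      linarith
    · intro hx2 hy2 hnot
      have T2 : QE wA₂ (restr A A₂ hA₂ (dlt x)) + QE wA₂ (restr A A₂ hA₂ (dlt y))
          - QE wA₂ (restr A A₂ hA₂ (dlt x) + restr A A₂ hA₂ (dlt y))
          = 2 * wA₂ ⟨⟨(x : F), hx2⟩, (hA₂ ⟨(x : F), hx2⟩).mpr x.2⟩
              ⟨⟨(y : F), hy2⟩, (hA₂ ⟨(y : F), hy2⟩).mpr y.2⟩ := by
        rw [restr_dlt_mem x hx2, restr_dlt_mem y hy2]
        exact T_side_two hwA₂
          (fun h => hval (subsub_val h))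
      have T1 : QE wA₁ (restr A A₁ hA₁ (dlt x)) + QE wA₁ (restr A A₁ hA₁ (dlt y))
          - QE wA₁ (restr A A₁ hA₁ (dlt x) + restr A A₁ hA₁ (dlt y)) = 0 := by
        apply T_side_zero
        rcases not_and_or.mp hnot with hx | hy
        · exact Or.inl (restr_dlt_zero x hx)
        · exact Or.inr (restr_dlt_zero y hy)
      linarith
    · intro hnot1 hnot2
      have T1 : QE wA₁ (restr A A₁ hA₁ (dlt x)) + QE wA₁ (restr A A₁ hA₁ (dlt y))
          - QE wA₁ (restr A A₁ hA₁ (dlt x) + restr A A₁ hA₁ (dlt y)) = 0 := by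
        apply T_side_zero
        rcases not_and_or.mp hnot1 with hx | hy
        · exact Or.inl (restr_dlt_zero x hx)
        · exact Or.inr (restr_dlt_zero y hy)
      have T2 : QE wA₂ (restr A A₂ hA₂ (dlt x)) + QE wA₂ (restr A A₂ hA₂ (dlt y))
          - QE wA₂ (restr A A₂ hA₂ (dlt x) + restr A A₂ hA₂ (dlt y)) = 0 := by
        apply T_side_zero
        rcases not_and_or.mp hnot2 with hx | hy
        · exact Or.inl (restr_dlt_zero x hx)
        · exact Or.inr (restr_dlt_zero y hy)
      linarith
end

section
/- Let F₁, F₂ be two nonempty sets such that F₁ ∩ F₂ is a nonempty finite set. For i = 1, 2, let (E_i, 𝓕_i) be a resistance form on F_i, and let (E, 𝓕) be the resistance form on F₁ ∪ F₂ given by 𝓕 = {f : f|_{F₁} ∈ 𝓕₁, f|_{F₂} ∈ 𝓕₂} and E(f,f) = E₁(f|_{F₁}, f|_{F₁}) + E₂(f|_{F₂}, f|_{F₂}). Let A ⊆ F₁ ∪ F₂ be a finite set containing F₁ ∩ F₂. Suppose f ∈ 𝓕 minimizes E(g,g) over all g ∈ 𝓕 with g|_A = f|_A. Then for i = 1, 2,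 the restriction f|_{F_i} minimizes E_i(h,h) over all h ∈ 𝓕_i with h|_{A ∩ F_i} = f|_{A ∩ F_i}. -/
open scoped Classical

/-- Let `(En, Dom)` be the glued resistance form on `F₁ ∪ F₂` of resistance forms on `F₁, F₂`
with nonempty finite intersection, and let `A ⊇ F₁ ∩ F₂` be finite.  If `f ∈ Dom` minimizes the
energy among all elements of `Dom` with the same restriction to `A`, then `f|_{F_i}` minimizes
`En_i` among all elements of `Dom_i` with the same restriction to `A ∩ F_i`, for `i = 1, 2`. -/
theorem harmonic_restriction_glue {F : Type*} (S₁ S₂ : Set F)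
    (hUnion : S₁ ∪ S₂ = Set.univ)
    (hFin : (S₁ ∩ S₂).Finite) (hNe : (S₁ ∩ S₂).Nonempty)
    (En₁ : (↥S₁ → ℝ) → (↥S₁ → ℝ) → ℝ) (Dom₁ : Set (↥S₁ → ℝ))
    (En₂ : (↥S₂ → ℝ) → (↥S₂ → ℝ) → ℝ) (Dom₂ : Set (↥S₂ → ℝ))
    (h₁ : IsResistanceForm ↥S₁ En₁ Dom₁)
    (h₂ : IsResistanceForm ↥S₂ En₂ Dom₂)
    (En : (F → ℝ) → (F → ℝ) → ℝ) (Dom : Set (F → ℝ))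
    (hDom : Dom = {f : F → ℝ | S₁.restrict f ∈ Dom₁ ∧ S₂.restrict f ∈ Dom₂})
    (hEn : ∀ f g : F → ℝ,
      En f g = En₁ (S₁.restrict f) (S₁.restrict g) + En₂ (S₂.restrict f) (S₂.restrict g))
    (A : Set F) (hAfin : A.Finite) (hsub : S₁ ∩ S₂ ⊆ A)
    (f : F → ℝ) (hf : f ∈ Dom)
    (hmin : ∀ g ∈ Dom, A.restrict g = A.restrict f → En f f ≤ En g g) :
    (∀ h ∈ Dom₁, (∀ s : ↥S₁, (s : F) ∈ A → h s = f s) →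
      En₁ (S₁.restrict f) (S₁.restrict f) ≤ En₁ h h) ∧
    (∀ h ∈ Dom₂, (∀ s : ↥S₂, (s : F) ∈ A → h s = f s) →
      En₂ (S₂.restrict f) (S₂.restrict f) ≤ En₂ h h) := by
  subst hDom
  have key : ∀ (S T : Set F), S ∪ T = Set.univ → S ∩ T ⊆ A →
      ∀ (EnS : (↥S → ℝ) → (↥S → ℝ) → ℝ) (DomS : Set (↥S → ℝ))
        (EnT : (↥T → ℝ) → (↥T → ℝ) → ℝ) (DomT : Set (↥T → ℝ)),
      S.restrict f ∈ DomS → T.restrict f ∈ DomT →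
      (∀ g : F → ℝ, T.restrict g ∈ DomT → S.restrict g ∈ DomS →
        A.restrict g = A.restrict f → EnS (S.restrict f) (S.restrict f)
          + EnT (T.restrict f) (T.restrict f)
          ≤ EnS (S.restrict g) (S.restrict g) + EnT (T.restrict g) (T.restrict g)) →
      ∀ h ∈ DomS, (∀ s : ↥S, (s : F) ∈ A → h s = f s) →
        EnS (S.restrict f) (S.restrict f) ≤ EnS h h := by
    intro S T _ hST EnS DomS EnT DomT hfS hfT hmin' h hh hagree
    set g : F → ℝ := fun x => if hx : x ∈ S then h ⟨x, hx⟩ else f x with hgdef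
    have hg1 : S.restrict g = h := by
      funext s
      simp only [Set.restrict, Set.domRestrict, g, s.2, dif_pos]
    have hg2 : T.restrict g = T.restrict f := by
      funext s
      simp only [Set.restrict, Set.domRestrict, g]
      split_ifs with hx
      · exact hagree ⟨(s : F), hx⟩ (hST ⟨hx, s.2⟩)
      · rfl
    have hgA : A.restrict g = A.restrict f := by
      funext a
      simp only [Set.restrict, Set.domRestrict, g]
      split_ifs with hx
      · exact hagree ⟨(a : F), hx⟩ a.2
      · rfl
    have := hmin' g (by rw [hg2]; exact hfT) (by rw [hg1]; exact hh) hgA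
    rw [hg1, hg2] at this
    linarith
  constructor
  · refine key S₁ S₂ hUnion hsub En₁ Dom₁ En₂ Dom₂ hf.1 hf.2 ?_
    intro g hgT hgS hgA
    have := hmin g ⟨hgS, hgT⟩ hgA
    rw [hEn f f, hEn g g] at this
    linarith
  · refine key S₂ S₁ (by rw [Set.union_comm]; exact hUnion)
      (by rw [Set.inter_comm]; exact hsub) En₂ Dom₂ En₁ Dom₁ hf.2 hf.1 ?_
    intro g hgT hgS hgA
    have := hmin g ⟨hgT, hgS⟩ hgA
    rw [hEn f f, hEn g g] at this
    linarith
end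

section
/- Let (E, 𝓕) be a resistance form on a nonempty set F and let B ⊆ F be a nonempty finite subset. Then every function g : B → ℝ admits an extension in 𝓕, i.e., there exists f ∈ 𝓕 with f|_B = g. (In the notation of traces, 𝓕|_B consists of all real-valued functions on B.) -/
open scoped Classical

/-- For a resistance form `(En, Dom)` on `F` and a nonempty finite subset `B ⊆ F`, every
function `g : B → ℝ` extends to an element of `Dom`; i.e. `Dom|_B` is all of `B → ℝ`. -/
theorem trace_domain_full {F : Type*}
    (En : (F → ℝ) → (F → ℝ) → ℝ) (Dom : Set (F → ℝ))
    (hrf : IsResistanceForm F En Dom)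
    (B : Set F) (hBfin : B.Finite) (hBne : B.Nonempty) :
    ∀ g : ↥B → ℝ, ∃ f ∈ Dom, B.restrict f = g := by
  classical
  -- closure under subtraction
  have hsub : ∀ {f g : F → ℝ}, f ∈ Dom → g ∈ Dom → f - g ∈ Dom := by
    intro f g hf hg
    have := hrf.add_mem hf (hrf.smul_mem (-1) hg)
    simpa [sub_eq_add_neg, neg_one_smul] using this
  -- for x ≠ y, a [0,1]-valued function with f x = 1, f y = 0
  have pair : ∀ x y : F, x ≠ y →
      ∃ f ∈ Dom, f x = 1 ∧ f y = 0 ∧ ∀ t, 0 ≤ f t ∧ f t ≤ 1 := by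
    intro x y hxy
    obtain ⟨h, hh, hne⟩ := hrf.separates hxy
    have hc : h x - h y ≠ 0 := sub_ne_zero.mpr hne
    obtain ⟨f0, hf0, hf0x, hf0y⟩ : ∃ f0 ∈ Dom, f0 x = 1 ∧ f0 y = 0 := by
      refine ⟨(h x - h y)⁻¹ • h + fun _ => -((h x - h y)⁻¹ * h y),
        hrf.add_mem (hrf.smul_mem _ hh) (hrf.const_mem _), ?_, ?_⟩
      · simp only [Pi.add_apply, Pi.smul_apply, smul_eq_mul]
        field_simp
        ring
      · simp only [Pi.add_apply, Pi.smul_apply, smul_eq_mul]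
        ring
    refine ⟨fun t => min (max (f0 t) 0) 1, (hrf.markov hf0).1, ?_, ?_, ?_⟩
    · show min (max (f0 x) 0) 1 = 1
      rw [hf0x]; norm_num
    · show min (max (f0 y) 0) 1 = 0
      rw [hf0y]; norm_num
    · intro t
      constructor
      · exact le_min (le_max_right _ _) zero_le_one
      · exact min_le_right _ _
  -- closure under pointwise min for [0,1]-valued functions
  have minmem : ∀ {f g : F → ℝ}, f ∈ Dom → g ∈ Dom →
      (∀ t, 0 ≤ f t ∧ f t ≤ 1) → (∀ t, 0 ≤ g t ∧ g t ≤ 1) →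
      (fun t => min (f t) (g t)) ∈ Dom := by
    intro f g hf hg hfb hgb
    have h1 : f - g ∈ Dom := hsub hf hg
    have h2 := (hrf.markov h1).1
    have key : (fun t => min (f t) (g t))
        = f - fun t => min (max ((f - g) t) 0) 1 := by
      funext t
      obtain ⟨ha0, ha1⟩ := hfb t
      obtain ⟨hb0, hb1⟩ := hgb t
      simp only [Pi.sub_apply]
      rcases le_total (f t) (g t) with h | h
      · rw [min_eq_left h, max_eq_right (by linarith : f t - g t ≤ 0),
          min_eq_left zero_le_one]; ring
      · rw [min_eq_right h, max_eq_left (by linarith : (0:ℝ) ≤ f t - g t),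
          min_eq_left (by linarith : f t - g t ≤ 1)]; ring
    rw [key]
    exact hsub hf h2
  -- indicator-like functions avoiding a finite set
  have ind : ∀ (s : Finset F) (x : F), x ∉ s →
      ∃ f ∈ Dom, f x = 1 ∧ (∀ y ∈ s, f y = 0) ∧ ∀ t, 0 ≤ f t ∧ f t ≤ 1 := by
    intro s
    induction s using Finset.induction_on with
    | empty =>
      intro x _
      exact ⟨fun _ => 1, hrf.const_mem 1, rfl, by simp, fun t => by norm_num⟩
    | insert a s ha ih =>
      intro x hx
      have hxa : x ≠ a := fun h => hx (by simp [h])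
      have hxs : x ∉ s := fun h => hx (Finset.mem_insert_of_mem h)
      obtain ⟨f, hf, hfx, hfs, hfb⟩ := ih x hxs
      obtain ⟨g, hg, hgx, hga, hgb⟩ := pair x a hxa
      refine ⟨fun t => min (f t) (g t), minmem hf hg hfb hgb, ?_, ?_, ?_⟩
      · show min (f x) (g x) = 1
        rw [hfx, hgx]; norm_num
      · intro y hy
        rcases Finset.mem_insert.mp hy with h | h
        · show min (f y) (g y) = 0
          rw [h, hga]; exact min_eq_right (hfb a).1
        · show min (f y) (g y) = 0
          rw [hfs y h]; exact min_eq_left (hgb y).1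
      · intro t
        exact ⟨le_min (hfb t).1 (hgb t).1, le_trans (min_le_left _ _) (hfb t).2⟩
  haveI := hBfin.fintype
  intro g
  -- pick indicator functions for each point of B
  have hind : ∀ b : ↥B, ∃ f ∈ Dom, f ↑b = 1 ∧ ∀ y ∈ B, y ≠ ↑b → f y = 0 := by
    intro b
    obtain ⟨f, hf, hfx, hfs, -⟩ := ind (hBfin.toFinset.erase ↑b) ↑b
      (Finset.notMem_erase _ _)
    refine ⟨f, hf, hfx, fun y hy hne => hfs y ?_⟩
    exact Finset.mem_erase.mpr ⟨hne, hBfin.mem_toFinset.mpr hy⟩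
  choose e he h1 h0 using hind
  have summem : ∀ s : Finset ↥B, (fun t => ∑ b ∈ s, g b * e b t) ∈ Dom := by
    intro s
    induction s using Finset.induction_on with
    | empty => simpa using hrf.const_mem 0
    | insert a s ha ih =>
      have := hrf.add_mem (hrf.smul_mem (g a) (he a)) ih
      convert this using 1
      funext t
      simp [Finset.sum_insert ha, smul_eq_mul]
  refine ⟨fun t => ∑ b : ↥B, g b * e b t, summem Finset.univ, ?_⟩
  funext a
  show ∑ b : ↥B, g b * e b ↑a = g a
  rw [Finset.sum_eq_single a]
  · rw [h1 a]; ring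
  · intro b _ hba
    have : (↑a : F) ≠ ↑b := fun h => hba (Subtype.ext h.symm)
    rw [h0 b ↑a a.2 this]; ring
  · intro h; exact absurd (Finset.mem_univ a) h
end
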